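/- Let L, L' : ℝ^d → ℝ be C² functions whose Hessians have largest eigenvalue at most λ_M everywhere, let θ̂ minimize L and θ̂' minimize L', and suppose Δ := ‖θ̂' − θ̂‖₂ > ρ > 0. Then for every μ ∈ [0, Δ − ρ] there exists a pair (θ̃₀, θ̃₀') with ‖θ̃₀ − θ̃₀'‖₂ ≤ ρ such that L(θ̃₀) + L'(θ̃₀') − L(θ̂) − L'(θ̂') ≤ (λ_M/2)(μ² + (Δ − μ − ρ)²). -/

import Mathlib

open Set

theorem quad_aux {E : Type*} [NormedAddCommGroup E] [NormedSpace ℝ E]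
    (f : E → ℝ) (lM : ℝ) (hf : ContDiff ℝ 2 f)
    (hH : ∀ ξ v, iteratedFDeriv ℝ 2 f ξ ![v, v] ≤ lM * ‖v‖ ^ 2)
    (xh : E) (hmin : ∀ θ, f xh ≤ f θ) (x : E) :
    f x ≤ f xh + lM / 2 * ‖x - xh‖ ^ 2 := by
  set v := x - xh with hv
  set h : ℝ → E := fun t => xh + t • v with hhdef
  have hh : ∀ t : ℝ, HasDerivAt h v t := by
    intro t
    simpa [hhdef] using ((hasDerivAt_id t).smul_const v).const_add xh
  have hhc : ContDiff ℝ 2 h := contDiff_const.add (contDiff_id.smul contDiff_const)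
  set g : ℝ → ℝ := fun t => f (h t) with hgdef
  have hg : ContDiff ℝ 2 g := hf.comp hhc
  have hfd : Differentiable ℝ f := hf.differentiable (by norm_num)
  set φ : E → (E →L[ℝ] ℝ) := fderiv ℝ f with hφ
  have hφd : Differentiable ℝ φ := (hf.fderiv_right (m := 1) (le_refl 2)).differentiable (by norm_num)
  have hg' : ∀ t : ℝ, HasDerivAt g (φ (h t) v) t := fun t =>
    ((hfd (h t)).hasFDerivAt).comp_hasDerivAt t (hh t)
  have hg'' : ∀ t : ℝ, HasDerivAt (fun s => φ (h s) v)
      (iteratedFDeriv ℝ 2 f (h t) ![v, v]) t := by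
    intro t
    have hA : HasDerivAt (fun s => φ (h s)) (fderiv ℝ φ (h t) v) t :=
      ((hφd (h t)).hasFDerivAt).comp_hasDerivAt t (hh t)
    have := hA.clm_apply (hasDerivAt_const t v)
    simpa [iteratedFDeriv_two_apply] using this
  have hφxh : φ xh = 0 := by
    exact IsLocalMin.fderiv_eq_zero (isMinOn_univ_iff.mpr hmin |>.isLocalMin Filter.univ_mem)
  have h0 : h 0 = xh := by simp [hhdef]
  have h1 : h 1 = x := by simp [hhdef, hv]
  have hderivg : deriv g = fun t => φ (h t) v := funext fun t => (hg' t).deriv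
  have huniq : UniqueDiffOn ℝ (Icc (0:ℝ) 1) := uniqueDiffOn_Icc one_pos
  have heqon : ∀ t ∈ Ioo (0:ℝ) 1,
      iteratedDerivWithin 1 g (Icc 0 1) t = φ (h t) v := by
    intro t ht
    rw [iteratedDerivWithin_one,
      derivWithin_of_mem_nhds (Icc_mem_nhds ht.1 ht.2), hderivg]
  have hdiffsnd : Differentiable ℝ (fun s => φ (h s) v) := fun t => (hg'' t).differentiableAt
  obtain ⟨c, hc, heq⟩ := taylor_mean_remainder_lagrange (n := 1) (x₀ := 0) (x := 1) (by norm_num : (0:ℝ) ≠ 1)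
    (by rw [uIcc_of_le zero_le_one]; exact hg.contDiffOn.of_le one_le_two)
    (by rw [uIcc_of_le zero_le_one, uIoo_of_le zero_le_one]; exact hdiffsnd.differentiableOn.congr heqon)
  rw [uIcc_of_le zero_le_one] at heq
  rw [uIoo_of_le zero_le_one] at hc
  have htay : taylorWithinEval g 1 (Icc (0:ℝ) 1) 0 1 = g 0 := by
    have hd0 : derivWithin g (Icc (0:ℝ) 1) 0 = 0 := by
      rw [(hg' 0).differentiableAt.derivWithin (huniq 0 (by norm_num))]
      rw [(hg' 0).deriv, h0, hφxh]; simp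
    simp [iteratedDerivWithin_one, hd0]
  have hsecond : iteratedDerivWithin 2 g (Icc (0:ℝ) 1) c ≤ lM * ‖v‖ ^ 2 := by
    have hmem : Icc (0:ℝ) 1 ∈ nhds c := Icc_mem_nhds hc.1 hc.2
    have : iteratedDerivWithin 2 g (Icc (0:ℝ) 1) c
        = deriv (iteratedDerivWithin 1 g (Icc 0 1)) c := by
      rw [iteratedDerivWithin_succ,
        derivWithin_of_mem_nhds hmem]
    rw [this]
    have hev : iteratedDerivWithin 1 g (Icc 0 1) =ᶠ[nhds c] fun s => φ (h s) v :=
      Filter.eventuallyEq_of_mem (Ioo_mem_nhds hc.1 hc.2) heqon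
    rw [hev.deriv_eq, (hg'' c).deriv]
    exact hH (h c) v
  rw [htay] at heq
  have : g 1 - g 0 ≤ lM * ‖v‖ ^ 2 / 2 := by
    rw [heq]
    norm_num
    nlinarith [hsecond]
  have hg1 : g 1 = f x := by rw [hgdef]; simp [h1]
  have hg0 : g 0 = f xh := by rw [hgdef]; simp [h0]
  rw [hg1, hg0] at this
  linarith

/-- Under the same smoothness/Hessian assumptions, if the global minimizers
satisfy `Δ = ‖θ̂' − θ̂‖ > ρ > 0`, then for every `μ ∈ [0, Δ − ρ]` there is a feasible pair
`(θ̃₀, θ̃₀')` with `‖θ̃₀ − θ̃₀'‖ ≤ ρ` and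
`L(θ̃₀) + L'(θ̃₀') − L(θ̂) − L'(θ̂') ≤ (λM/2)(μ² + (Δ − μ − ρ)²)`. -/
theorem stmt6 {d : ℕ} (L L' : EuclideanSpace ℝ (Fin d) → ℝ)
    (lM : ℝ) (hlM : 0 ≤ lM)
    (hL : ContDiff ℝ 2 L) (hL' : ContDiff ℝ 2 L')
    (hHess : ∀ ξ v, 0 ≤ iteratedFDeriv ℝ 2 L ξ ![v, v] ∧
      iteratedFDeriv ℝ 2 L ξ ![v, v] ≤ lM * ‖v‖ ^ 2)
    (hHess' : ∀ ξ v, 0 ≤ iteratedFDeriv ℝ 2 L' ξ ![v, v] ∧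
      iteratedFDeriv ℝ 2 L' ξ ![v, v] ≤ lM * ‖v‖ ^ 2)
    (θhat θhat' : EuclideanSpace ℝ (Fin d))
    (hmin : ∀ θ, L θhat ≤ L θ) (hmin' : ∀ θ, L' θhat' ≤ L' θ)
    (ρ : ℝ) (hρ : 0 < ρ) (hΔ : ρ < ‖θhat' - θhat‖) :
    ∀ μ ∈ Set.Icc (0 : ℝ) (‖θhat' - θhat‖ - ρ),
      ∃ θ₀ θ₀' : EuclideanSpace ℝ (Fin d), ‖θ₀ - θ₀'‖ ≤ ρ ∧
        L θ₀ + L' θ₀' - L θhat - L' θhat' ≤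
          lM / 2 * (μ ^ 2 + (‖θhat' - θhat‖ - μ - ρ) ^ 2) := by
  intro μ hμ
  obtain ⟨hμ0, hμ1⟩ := hμ
  set u := θhat' - θhat with hu
  set Δ := ‖u‖ with hΔdef
  have hΔpos : 0 < Δ := lt_trans hρ hΔ
  refine ⟨θhat + (μ / Δ) • u, θhat + ((μ + ρ) / Δ) • u, ?_, ?_⟩
  · have : (θhat + (μ / Δ) • u) - (θhat + ((μ + ρ) / Δ) • u) = (-(ρ / Δ)) • u := by
      have hc : μ / Δ - (μ + ρ) / Δ = -(ρ / Δ) := by field_simp; ring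
      rw [← hc, sub_smul]
      abel
    rw [this, norm_smul]
    simp only [norm_neg, Real.norm_eq_abs, abs_div]
    rw [abs_of_pos hρ, abs_of_pos hΔpos]
    rw [div_mul_eq_mul_div, mul_div_assoc, div_self hΔpos.ne']
    simp
  · have b1 : L (θhat + (μ / Δ) • u) ≤ L θhat + lM / 2 * μ ^ 2 := by
      have := quad_aux L lM hL (fun ξ v => (hHess ξ v).2) θhat hmin (θhat + (μ / Δ) • u)
      have hn : ‖(θhat + (μ / Δ) • u) - θhat‖ = μ := by
        simp only [add_sub_cancel_left, norm_smul, Real.norm_eq_abs]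
        rw [abs_of_nonneg (div_nonneg hμ0 hΔpos.le), div_mul_eq_mul_div, mul_div_assoc,
          div_self hΔpos.ne', mul_one]
      rwa [hn] at this
    have b2 : L' (θhat + ((μ + ρ) / Δ) • u) ≤ L' θhat' + lM / 2 * (Δ - μ - ρ) ^ 2 := by
      have := quad_aux L' lM hL' (fun ξ v => (hHess' ξ v).2) θhat' hmin'
        (θhat + ((μ + ρ) / Δ) • u)
      have hsub : (θhat + ((μ + ρ) / Δ) • u) - θhat' = ((μ + ρ) / Δ - 1) • u := by
        rw [sub_smul, one_smul]
        rw [hu]; abel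
      have hn : ‖(θhat + ((μ + ρ) / Δ) • u) - θhat'‖ = Δ - μ - ρ := by
        rw [hsub, norm_smul, Real.norm_eq_abs]
        have hle : (μ + ρ) / Δ ≤ 1 := by
          rw [div_le_one hΔpos]; linarith
        rw [abs_of_nonpos (by linarith), neg_sub, sub_mul, one_mul, div_mul_eq_mul_div,
          mul_div_assoc, div_self hΔpos.ne', mul_one]
        ring
      rwa [hn] at this
    linarith
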